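/- arXiv:1207.4336 — 3 statements merged into one kernel-verified Lean document; each statement's English description precedes it below -/
import Mathlib

section
/- Let 0 < x < 1 and δ > 0 with δ not an integer multiple of 2π, and set ε = sign(sin(δ/2)). Then for every real θ, ∫_{−δ/2}^{δ/2} log|1 − ε x e^{it}| dt ≤ ∫_{−δ/2}^{δ/2} log|1 − x e^{i(θ+t)}| dt ≤ ∫_{−δ/2}^{δ/2} log|1 + ε x e^{it}| dt. -/
open Real Complex

noncomputable def gg (x t : ℝ) : ℝ :=
  Real.log (‖1 - (x : ℂ) * Complex.exp (Complex.I * t)‖)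

lemma gg_eq (x t : ℝ) :
    gg x t = Real.log (Real.sqrt (1 - 2*x*Real.cos t + x^2)) := by
  unfold gg
  congr 1
  rw [mul_comm Complex.I (t : ℂ), Complex.norm_def]
  congr 1
  rw [Complex.normSq_apply]
  simp [Complex.exp_ofReal_mul_I_re, Complex.exp_ofReal_mul_I_im]
  nlinarith [Real.sin_sq_add_cos_sq t]

lemma q_pos {x : ℝ} (hx0 : 0 < x) (hx1 : x < 1) (t : ℝ) :
    0 < 1 - 2*x*Real.cos t + x^2 := by
  nlinarith [Real.cos_le_one t, mul_pos (sub_pos.2 hx1) (sub_pos.2 hx1)]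
lemma gg_cont {x : ℝ} (hx0 : 0 < x) (hx1 : x < 1) : Continuous (gg x) := by
  have hq : Continuous fun t : ℝ => 1 - 2*x*Real.cos t + x^2 := by continuity
  have : Continuous fun t : ℝ => Real.log (Real.sqrt (1 - 2*x*Real.cos t + x^2)) :=
    (Real.continuous_sqrt.comp hq).log fun t =>
      ne_of_gt (Real.sqrt_pos.2 (q_pos hx0 hx1 t))
  simpa [funext (gg_eq x)] using this

lemma gg_mono {x : ℝ} (hx0 : 0 < x) (hx1 : x < 1) {u v : ℝ}
    (h : Real.cos v ≤ Real.cos u) : gg x u ≤ gg x v := by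
  rw [gg_eq, gg_eq]
  have h1 := q_pos hx0 hx1 u
  have h2 := q_pos hx0 hx1 v
  rw [Real.log_le_log_iff (Real.sqrt_pos.2 h1) (Real.sqrt_pos.2 h2)]
  apply Real.sqrt_le_sqrt
  nlinarith

lemma gg_even (x t : ℝ) : gg x (-t) = gg x t := by
  rw [gg_eq, gg_eq, Real.cos_neg]

lemma gg_per (x t : ℝ) : gg x (t + 2*π) = gg x t := by
  rw [gg_eq, gg_eq, Real.cos_add_two_pi]

noncomputable def FF (x h c : ℝ) : ℝ := ∫ t in (c - h)..(c + h), gg x t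

lemma FF_even (x h c : ℝ) : FF x h (-c) = FF x h c := by
  unfold FF
  have : (∫ t in (c - h)..(c + h), gg x (-t)) = ∫ t in (-(c+h))..(-(c-h)), gg x t :=
    intervalIntegral.integral_comp_neg (fun t => gg x t)
  simp only [gg_even] at this
  rw [show -c - h = -(c+h) by ring, show -c + h = -(c-h) by ring]
  exact this.symm

lemma FF_per (x h : ℝ) : Function.Periodic (FF x h) (2*π) := by
  intro c
  unfold FF
  have : (∫ t in (c - h)..(c + h), gg x (t + 2*π))
      = ∫ t in (c - h + 2*π)..(c + h + 2*π), gg x t :=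
    intervalIntegral.integral_comp_add_right (fun t => gg x t) (2*π)
  simp only [gg_per] at this
  rw [show c + 2*π - h = c - h + 2*π by ring, show c + 2*π + h = c + h + 2*π by ring]
  exact this.symm
lemma FF_diff {x : ℝ} (hx0 : 0 < x) (hx1 : x < 1) (h b c : ℝ) :
    FF x h c - FF x h b = ∫ s in b..c, (gg x (s + h) - gg x (s - h)) := by
  have hc := gg_cont hx0 hx1
  have hi : ∀ a b : ℝ, IntervalIntegrable (gg x) MeasureTheory.volume a b :=
    fun a b => hc.intervalIntegrable a b
  have e1 : (∫ t in (b - h)..(b + h), gg x t) + ∫ t in (b + h)..(c + h), gg x t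
      = ∫ t in (b - h)..(c + h), gg x t :=
    intervalIntegral.integral_add_adjacent_intervals (hi _ _) (hi _ _)
  have e2 : (∫ t in (b - h)..(c - h), gg x t) + ∫ t in (c - h)..(c + h), gg x t
      = ∫ t in (b - h)..(c + h), gg x t :=
    intervalIntegral.integral_add_adjacent_intervals (hi _ _) (hi _ _)
  have e3 : (∫ s in b..c, gg x (s + h)) = ∫ t in (b + h)..(c + h), gg x t :=
    intervalIntegral.integral_comp_add_right (fun t => gg x t) h
  have e4 : (∫ s in b..c, gg x (s - h)) = ∫ t in (b - h)..(c - h), gg x t :=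
    intervalIntegral.integral_comp_sub_right (fun t => gg x t) h
  have e5 : (∫ s in b..c, (gg x (s + h) - gg x (s - h)))
      = (∫ s in b..c, gg x (s + h)) - ∫ s in b..c, gg x (s - h) :=
    intervalIntegral.integral_sub
      ((hc.comp (by continuity)).intervalIntegrable _ _)
      ((hc.comp (by continuity)).intervalIntegrable _ _)
  unfold FF
  rw [e5, e3, e4]
  linarith

lemma FF_mono {x : ℝ} (hx0 : 0 < x) (hx1 : x < 1) {h b c : ℝ}
    (hsin : 0 ≤ Real.sin h) (hb : 0 ≤ b) (hbc : b ≤ c) (hc : c ≤ π) :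
    FF x h b ≤ FF x h c := by
  have key : ∀ s ∈ Set.Icc b c, 0 ≤ gg x (s + h) - gg x (s - h) := by
    intro s hs
    have hsins : 0 ≤ Real.sin s :=
      Real.sin_nonneg_of_nonneg_of_le_pi (le_trans hb hs.1) (le_trans hs.2 hc)
    have : Real.cos (s + h) ≤ Real.cos (s - h) := by
      rw [Real.cos_add, Real.cos_sub]
      nlinarith
    linarith [gg_mono hx0 hx1 this]
  have : 0 ≤ ∫ s in b..c, (gg x (s + h) - gg x (s - h)) :=
    intervalIntegral.integral_nonneg hbc (fun u hu => key u hu)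
  linarith [FF_diff hx0 hx1 h b c]

lemma FF_anti {x : ℝ} (hx0 : 0 < x) (hx1 : x < 1) {h b c : ℝ}
    (hsin : Real.sin h ≤ 0) (hb : 0 ≤ b) (hbc : b ≤ c) (hc : c ≤ π) :
    FF x h c ≤ FF x h b := by
  have key : ∀ s ∈ Set.Icc b c, 0 ≤ gg x (s - h) - gg x (s + h) := by
    intro s hs
    have hsins : 0 ≤ Real.sin s :=
      Real.sin_nonneg_of_nonneg_of_le_pi (le_trans hb hs.1) (le_trans hs.2 hc)
    have : Real.cos (s - h) ≤ Real.cos (s + h) := by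
      rw [Real.cos_add, Real.cos_sub]
      nlinarith
    linarith [gg_mono hx0 hx1 this]
  have : 0 ≤ ∫ s in b..c, (gg x (s - h) - gg x (s + h)) := by
    apply intervalIntegral.integral_nonneg hbc (fun u hu => key u hu)
  have hdiff := FF_diff hx0 hx1 h b c
  have : (∫ s in b..c, (gg x (s - h) - gg x (s + h)))
      = -∫ s in b..c, (gg x (s + h) - gg x (s - h)) := by
    rw [← intervalIntegral.integral_neg]
    congr 1; funext s; ring
  linarith [‹0 ≤ ∫ s in b..c, (gg x (s - h) - gg x (s + h))›]

lemma FF_reduce (x h θ : ℝ) : ∃ c, 0 ≤ c ∧ c ≤ π ∧ FF x h θ = FF x h c := by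
  set c' := toIocMod Real.two_pi_pos (-π) θ with hc'
  have hmem := toIocMod_mem_Ioc Real.two_pi_pos (-π) θ
  rw [show -π + 2*π = π by ring] at hmem
  have hFθ : FF x h θ = FF x h c' := by
    have : c' = θ - toIocDiv Real.two_pi_pos (-π) θ • (2*π) := rfl
    rw [this, (FF_per x h).sub_zsmul_eq]
  rcases le_or_gt 0 c' with hpos | hneg
  · exact ⟨c', hpos, hmem.2, hFθ⟩
  · refine ⟨-c', by linarith, by linarith [hmem.1], ?_⟩
    rw [hFθ, ← FF_even x h (-c'), neg_neg]
/-- Lemma 1 of the paper: extremal bounds for ∫ log|1 − x e^{i(θ+t)}| dt. -/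
theorem stmt_3 (x δ : ℝ) (hx0 : 0 < x) (hx1 : x < 1) (hδ : 0 < δ)
    (hδ' : ∀ n : ℤ, δ ≠ 2 * π * n)
    (ε : ℝ) (hε : ε = Real.sign (Real.sin (δ/2))) (θ : ℝ) :
    (∫ t in (-δ/2)..(δ/2),
        Real.log (‖1 - (ε : ℂ) * x * Complex.exp (Complex.I * t)‖))
      ≤ (∫ t in (-δ/2)..(δ/2),
        Real.log (‖1 - (x : ℂ) * Complex.exp (Complex.I * (θ + t))‖)) ∧
    (∫ t in (-δ/2)..(δ/2),
        Real.log (‖1 - (x : ℂ) * Complex.exp (Complex.I * (θ + t))‖))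
      ≤ (∫ t in (-δ/2)..(δ/2),
        Real.log (‖1 + (ε : ℂ) * x * Complex.exp (Complex.I * t)‖)) := by
  have hsne : Real.sin (δ/2) ≠ 0 := by
    intro h0
    rcases Real.sin_eq_zero_iff.1 h0 with ⟨n, hn⟩
    apply hδ' n
    rw [show (2:ℝ) * π * n = 2 * ((n:ℝ) * π) by ring, hn]
    ring
  -- pointwise identities
  have hplus : ∀ t : ℝ, (1 : ℂ) + (x : ℂ) * Complex.exp (Complex.I * t)
      = 1 - (x : ℂ) * Complex.exp (Complex.I * ((π : ℝ) + t : ℝ)) := by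
    intro t
    have : Complex.exp (Complex.I * ((π : ℝ) + t : ℝ)) = - Complex.exp (Complex.I * t) := by
      push_cast
      rw [mul_add, Complex.exp_add, mul_comm Complex.I (π:ℂ), Complex.exp_pi_mul_I]
      ring
    rw [this]; ring
  -- middle integral
  have hM : (∫ t in (-δ/2)..(δ/2),
      Real.log (‖1 - (x : ℂ) * Complex.exp (Complex.I * (θ + t))‖))
      = FF x (δ/2) θ := by
    have h1 : (∫ t in (-δ/2)..(δ/2),
        Real.log (‖1 - (x : ℂ) * Complex.exp (Complex.I * (θ + t))‖))
        = ∫ t in (-δ/2)..(δ/2), gg x (θ + t) := by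
      apply intervalIntegral.integral_congr
      intro t _
      unfold gg
      norm_cast
    rw [h1, intervalIntegral.integral_comp_add_left (gg x) θ]
    unfold FF
    rw [show θ + -δ/2 = θ - δ/2 by ring]
  -- the two extremal integrals, as functions of sign s = ±1 on coefficient
  have hI0 : (∫ t in (-δ/2)..(δ/2),
      Real.log (‖1 - (x : ℂ) * Complex.exp (Complex.I * t)‖))
      = FF x (δ/2) 0 := by
    unfold FF gg
    rw [show (0:ℝ) - δ/2 = -δ/2 by ring, show (0:ℝ) + δ/2 = δ/2 by ring]
  have hIπ : (∫ t in (-δ/2)..(δ/2),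
      Real.log (‖1 + (x : ℂ) * Complex.exp (Complex.I * t)‖))
      = FF x (δ/2) π := by
    have h1 : (∫ t in (-δ/2)..(δ/2),
        Real.log (‖1 + (x : ℂ) * Complex.exp (Complex.I * t)‖))
        = ∫ t in (-δ/2)..(δ/2), gg x (π + t) := by
      apply intervalIntegral.integral_congr
      intro t _
      dsimp only
      unfold gg
      rw [hplus t]
    rw [h1, intervalIntegral.integral_comp_add_left (gg x) π]
    unfold FF
    rw [show π + -δ/2 = π - δ/2 by ring]
  obtain ⟨c, hc0, hcπ, hFc⟩ := FF_reduce x (δ/2) θ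
  rcases lt_or_gt_of_ne hsne with hneg | hpos
  · -- sin(δ/2) < 0, ε = -1
    have hε' : ε = -1 := by rw [hε, Real.sign_of_neg hneg]
    subst hε'
    have e1 : ∀ t : ℝ, (1 : ℂ) - ((-1 : ℝ) : ℂ) * x * Complex.exp (Complex.I * t)
        = 1 + (x : ℂ) * Complex.exp (Complex.I * t) := by intro t; push_cast; ring
    have e2 : ∀ t : ℝ, (1 : ℂ) + ((-1 : ℝ) : ℂ) * x * Complex.exp (Complex.I * t)
        = 1 - (x : ℂ) * Complex.exp (Complex.I * t) := by intro t; push_cast; ring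
    simp only [e1, e2]
    rw [hIπ, hI0, hM, hFc]
    exact ⟨FF_anti hx0 hx1 hneg.le hc0 hcπ le_rfl,
           FF_anti hx0 hx1 hneg.le le_rfl hc0 hcπ⟩
  · -- sin(δ/2) > 0, ε = 1
    have hε' : ε = 1 := by rw [hε, Real.sign_of_pos hpos]
    subst hε'
    have e1 : ∀ t : ℝ, (1 : ℂ) - ((1 : ℝ) : ℂ) * x * Complex.exp (Complex.I * t)
        = 1 - (x : ℂ) * Complex.exp (Complex.I * t) := by intro t; push_cast; ring
    have e2 : ∀ t : ℝ, (1 : ℂ) + ((1 : ℝ) : ℂ) * x * Complex.exp (Complex.I * t)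
        = 1 + (x : ℂ) * Complex.exp (Complex.I * t) := by intro t; push_cast; ring
    simp only [e1, e2]
    rw [hIπ, hI0, hM, hFc]
    exact ⟨FF_mono hx0 hx1 hpos.le le_rfl hc0 hcπ,
           FF_mono hx0 hx1 hpos.le hc0 hcπ le_rfl⟩
end

section
/- For 0 < x < 1 and δ > 0, the second derivative of F(θ) = Re ∫_{−δ/2}^{δ/2} log(1 − x e^{i(θ+t)}) dt satisfies F''(0) = 2 x sin(δ/2)/|1 − x e^{iδ/2}|² and F''(π) = −2 x sin(δ/2)/|1 + x e^{iδ/2}|². -/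
open Real Complex

/-- Second-derivative values of F(θ) = Re ∫_{−δ/2}^{δ/2} log(1 − x e^{i(θ+t)}) dt
at θ = 0 and θ = π. -/
theorem stmt_6 (x δ : ℝ) (hx0 : 0 < x) (hx1 : x < 1) (hδ : 0 < δ) :
    deriv (deriv (fun θ : ℝ => ∫ t in (-δ/2)..(δ/2),
        (Complex.log (1 - (x : ℂ) * Complex.exp (Complex.I * (θ + t)))).re)) 0
      = 2 * x * Real.sin (δ/2) /
        ‖1 - (x : ℂ) * Complex.exp (Complex.I * (δ/2))‖^2 ∧
    deriv (deriv (fun θ : ℝ => ∫ t in (-δ/2)..(δ/2),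
        (Complex.log (1 - (x : ℂ) * Complex.exp (Complex.I * (θ + t)))).re)) π
      = -(2 * x * Real.sin (δ/2) /
        ‖1 + (x : ℂ) * Complex.exp (Complex.I * (δ/2))‖^2) := by
  set q : ℝ → ℝ := fun s => 1 - 2*x*Real.cos s + x^2 with hq_def
  have habs : ∀ s : ℝ, ‖1 - (x:ℂ) * Complex.exp (Complex.I * s)‖ ^ 2 = q s := by
    intro s
    rw [Complex.sq_norm, Complex.normSq_apply]
    simp [Complex.exp_re, Complex.exp_im, Complex.sub_re, Complex.sub_im, Complex.mul_re,
      Complex.mul_im, hq_def]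
    nlinarith [Real.sin_sq_add_cos_sq s]
  have habs' : ‖1 + (x:ℂ) * Complex.exp (Complex.I * (δ/2))‖ ^ 2
      = 1 + 2*x*Real.cos (δ/2) + x^2 := by
    rw [Complex.sq_norm, Complex.normSq_apply]
    simp [Complex.exp_re, Complex.exp_im, Complex.add_re, Complex.add_im, Complex.mul_re,
      Complex.mul_im]
    nlinarith [Real.sin_sq_add_cos_sq (δ/2)]
  have hqpos : ∀ s : ℝ, 0 < q s := by
    intro s
    have h1 := Real.cos_le_one s
    have h2 := Real.neg_one_le_cos s
    simp only [hq_def]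
    nlinarith
  set g : ℝ → ℝ := fun s => (Complex.log (1 - (x:ℂ) * Complex.exp (Complex.I * s))).re
    with hg_def
  have hgq : g = fun s => Real.log (q s) / 2 := by
    funext s
    have h := habs s
    have habs0 : (0:ℝ) ≤ ‖1 - (x:ℂ) * Complex.exp (Complex.I * s)‖ :=
      norm_nonneg _
    simp only [hg_def, Complex.log_re]
    rw [← h, Real.log_pow]
    push_cast
    ring
  have hgcont : Continuous g := by
    rw [hgq]
    exact (((by fun_prop : Continuous q).log (fun s => (hqpos s).ne')).div_const 2)
  -- derivative of g
  have hg' : ∀ s : ℝ, HasDerivAt g (x * Real.sin s / q s) s := by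
    intro s
    have hq' : HasDerivAt q (2*x*Real.sin s) s := by
      have h1 : HasDerivAt (fun s : ℝ => Real.cos s) (-Real.sin s) s := Real.hasDerivAt_cos s
      have h2 := ((h1.const_mul (2*x)).const_sub 1).add_const (x^2)
      have e : (2*x*Real.sin s) = -(2*x*-Real.sin s) := by ring
      rw [e]
      exact h2
    have := (hq'.log (hqpos s).ne').div_const 2
    rw [hgq]
    have hq0 := (hqpos s).ne'
    have e : x * Real.sin s / q s = 2 * x * Real.sin s / q s / 2 := by
      field_simp
    rw [e]
    exact this
  -- F as difference of antiderivatives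
  set H : ℝ → ℝ := fun θ => ∫ s in (0:ℝ)..θ, g s with hH_def
  have hH' : ∀ θ : ℝ, HasDerivAt H (g θ) θ := fun θ =>
    intervalIntegral.integral_hasDerivAt_right (hgcont.intervalIntegrable _ _)
      (hgcont.stronglyMeasurableAtFilter _ _) hgcont.continuousAt
  set F : ℝ → ℝ := fun θ : ℝ => ∫ t in (-δ/2)..(δ/2),
      (Complex.log (1 - (x : ℂ) * Complex.exp (Complex.I * (θ + t)))).re with hF_def
  have hFH : F = fun θ => H (θ + δ/2) - H (θ - δ/2) := by
    funext θ
    have h1 : F θ = ∫ t in (-δ/2)..(δ/2), g (θ + t) := by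
      simp only [hF_def, hg_def]
      push_cast
      rfl
    rw [h1, intervalIntegral.integral_comp_add_left g θ, hH_def]
    rw [intervalIntegral.integral_interval_sub_left (hgcont.intervalIntegrable _ _)
      (hgcont.intervalIntegrable _ _)]
    congr 1 <;> ring
  have hF' : ∀ θ : ℝ, HasDerivAt F (g (θ + δ/2) - g (θ - δ/2)) θ := by
    intro θ
    rw [hFH]
    have h1 : HasDerivAt (fun θ : ℝ => H (θ + δ/2)) (g (θ + δ/2)) θ := by
      have := (hH' (θ + δ/2)).comp θ ((hasDerivAt_id θ).add_const (δ/2))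
      simpa [Function.comp_def] using this
    have h2 : HasDerivAt (fun θ : ℝ => H (θ - δ/2)) (g (θ - δ/2)) θ := by
      have := (hH' (θ - δ/2)).comp θ ((hasDerivAt_id θ).sub_const (δ/2))
      simpa [Function.comp_def] using this
    exact h1.sub h2
  have hderivF : deriv F = fun θ => g (θ + δ/2) - g (θ - δ/2) :=
    funext fun θ => (hF' θ).deriv
  have hF'' : ∀ θ : ℝ, HasDerivAt (deriv F)
      (x * Real.sin (θ + δ/2) / q (θ + δ/2) - x * Real.sin (θ - δ/2) / q (θ - δ/2)) θ := by
    intro θ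
    rw [hderivF]
    have h1 : HasDerivAt (fun θ : ℝ => g (θ + δ/2)) (x * Real.sin (θ + δ/2) / q (θ + δ/2)) θ := by
      have := (hg' (θ + δ/2)).comp θ ((hasDerivAt_id θ).add_const (δ/2))
      simpa [Function.comp_def] using this
    have h2 : HasDerivAt (fun θ : ℝ => g (θ - δ/2)) (x * Real.sin (θ - δ/2) / q (θ - δ/2)) θ := by
      have := (hg' (θ - δ/2)).comp θ ((hasDerivAt_id θ).sub_const (δ/2))
      simpa [Function.comp_def] using this
    exact h1.sub h2
  constructor
  · have hcast : Complex.I * ((δ:ℂ)/2) = Complex.I * ((δ/2 : ℝ):ℂ) := by push_cast; ring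
    rw [(hF'' 0).deriv, hcast, habs]
    have h0 : (0:ℝ) + δ/2 = δ/2 := by ring
    have h0' : (0:ℝ) - δ/2 = -(δ/2) := by ring
    rw [h0, h0', Real.sin_neg]
    have : q (-(δ/2)) = q (δ/2) := by simp [hq_def, Real.cos_neg]
    rw [this]
    field_simp
    ring
  · rw [(hF'' π).deriv, habs']
    have h1 : Real.sin (π + δ/2) = -Real.sin (δ/2) := by
      rw [Real.sin_add]; simp
    have h2 : Real.sin (π - δ/2) = Real.sin (δ/2) := Real.sin_pi_sub _
    have h3 : q (π + δ/2) = 1 + 2*x*Real.cos (δ/2) + x^2 := by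
      simp only [hq_def]
      rw [Real.cos_add]; simp; try ring
    have h4 : q (π - δ/2) = 1 + 2*x*Real.cos (δ/2) + x^2 := by
      simp only [hq_def]
      rw [Real.cos_sub]; simp; try ring
    rw [h1, h2, h3, h4]
    have hpos : (0:ℝ) < 1 + 2*x*Real.cos (δ/2) + x^2 := by
      have := hqpos (π + δ/2); rw [h3] at this; exact this
    field_simp
    ring
end

section
/- The series ∑_{n=1}^∞ (2 log(1 + 1/(2n−1)) − 1/n) converges and equals −γ + log π, where γ is the Euler–Mascheroni constant. -/
open Real Filter Finset Topology

private noncomputable def auxP (n : ℕ) : ℝ :=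
  ∏ i ∈ Finset.range n, (2 * (i : ℝ) + 2) / (2 * (i : ℝ) + 1)

private lemma auxP_pos (n : ℕ) : 0 < auxP n :=
  Finset.prod_pos fun i _ => by positivity

private lemma auxP_succ (n : ℕ) :
    auxP (n + 1) = auxP n * ((2 * (n : ℝ) + 2) / (2 * (n : ℝ) + 1)) :=
  Finset.prod_range_succ _ n

private lemma W_eq_auxP (n : ℕ) : Real.Wallis.W n = auxP n ^ 2 / (2 * n + 1) := by
  induction n with
  | zero => simp [Real.Wallis.W, auxP]
  | succ n ih =>
    rw [Real.Wallis.W_succ, ih, auxP_succ]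
    have h1 : (2 * (n : ℝ) + 1) ≠ 0 := by positivity
    have h3 : (2 * (n : ℝ) + 3) ≠ 0 := by positivity
    push_cast
    field_simp
    ring

private lemma sum_eq (n : ℕ) :
    ∑ i ∈ Finset.range n,
        (2 * Real.log (1 + 1 / (2 * (i + 1 : ℝ) - 1)) - 1 / (i + 1 : ℝ)) =
      2 * Real.log (auxP n) - (harmonic n : ℝ) := by
  rw [Finset.sum_sub_distrib]
  congr 1
  · rw [← Finset.mul_sum]
    congr 1
    rw [auxP, Real.log_prod (fun i _ => by positivity)]
    refine Finset.sum_congr rfl fun i _ => ?_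
    have h1 : (2 * (i : ℝ) + 1) ≠ 0 := by positivity
    have e0 : 2 * ((i : ℝ) + 1) - 1 = 2 * (i : ℝ) + 1 := by ring
    have e : 1 + 1 / (2 * ((i : ℝ) + 1) - 1) = (2 * (i : ℝ) + 2) / (2 * (i : ℝ) + 1) := by
      rw [e0]
      field_simp
      ring
    rw [e]
  · rw [harmonic]
    push_cast
    simp [one_div]

private lemma term_nonneg (n : ℕ) :
    0 ≤ 2 * Real.log (1 + 1 / (2 * (n + 1 : ℝ) - 1)) - 1 / (n + 1 : ℝ) := by
  have h1 : (0 : ℝ) < 2 * (n + 1 : ℝ) - 1 := by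
    have : (0 : ℝ) ≤ n := n.cast_nonneg
    linarith
  set x : ℝ := 1 / (2 * (n + 1 : ℝ) - 1) with hx
  have hxpos : 0 < x := by positivity
  have h2 : Real.log ((1 + x)⁻¹) ≤ (1 + x)⁻¹ - 1 :=
    Real.log_le_sub_one_of_pos (by positivity)
  rw [Real.log_inv] at h2
  have h3 : x / (1 + x) ≤ Real.log (1 + x) := by
    have : (1 : ℝ) - (1 + x)⁻¹ = x / (1 + x) := by field_simp; ring
    linarith
  have h4 : x / (1 + x) = 1 / (2 * (n + 1 : ℝ)) := by
    rw [hx]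
    have hd : 2 * ((n : ℝ) + 1) - 1 ≠ 0 := ne_of_gt h1
    have he : 1 + 1 / (2 * ((n : ℝ) + 1) - 1) = (2 * ((n : ℝ) + 1)) / (2 * ((n : ℝ) + 1) - 1) := by
      field_simp
      ring
    rw [he, div_div_div_eq, one_mul, div_mul_cancel_left₀ hd, one_div]
  rw [h4] at h3
  have h7 : 2 * (1 / (2 * ((n : ℝ) + 1))) = 1 / ((n : ℝ) + 1) := by
    rw [one_div, mul_inv, ← mul_assoc, mul_inv_cancel₀ two_ne_zero, one_mul, one_div]
  linarith [h3]

private lemma tendsto_partial_sums :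
    Tendsto
      (fun n => ∑ i ∈ Finset.range n,
        (2 * Real.log (1 + 1 / (2 * (i + 1 : ℝ) - 1)) - 1 / (i + 1 : ℝ)))
      atTop (𝓝 (-Real.eulerMascheroniConstant + Real.log π)) := by
  have key : ∀ n : ℕ,
      ∑ i ∈ Finset.range n,
          (2 * Real.log (1 + 1 / (2 * (i + 1 : ℝ) - 1)) - 1 / (i + 1 : ℝ)) =
        Real.log (Real.Wallis.W n) + Real.log ((2 * n + 1) / (n + 1))
          - (harmonic n - Real.log (n + 1)) := by
    intro n
    have h1 : (0 : ℝ) < 2 * (n : ℝ) + 1 := by positivity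
    have h2 : (0 : ℝ) < (n : ℝ) + 1 := by positivity
    rw [sum_eq, W_eq_auxP, Real.log_div (pow_ne_zero 2 (auxP_pos n).ne') h1.ne',
      Real.log_pow, Real.log_div h1.ne' h2.ne']
    push_cast
    ring
  rw [funext key]
  have hW : Tendsto (fun n : ℕ => Real.log (Real.Wallis.W n)) atTop
      (𝓝 (Real.log (π / 2))) := by
    exact (Real.continuousAt_log (by positivity)).tendsto.comp
      Real.Wallis.tendsto_W_nhds_pi_div_two
  have hratio : Tendsto (fun n : ℕ => Real.log ((2 * (n : ℝ) + 1) / ((n : ℝ) + 1)))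
      atTop (𝓝 (Real.log 2)) := by
    have h0 : Tendsto (fun n : ℕ => (2 : ℝ) - 1 / ((n : ℝ) + 1)) atTop (𝓝 2) := by
      simpa using tendsto_const_nhds.sub (tendsto_one_div_add_atTop_nhds_zero_nat (𝕜 := ℝ))
    have := (Real.continuousAt_log (by norm_num : (2 : ℝ) ≠ 0)).tendsto.comp h0
    refine this.congr fun n => ?_
    have h2 : ((n : ℝ) + 1) ≠ 0 := by positivity
    have harg : (2 : ℝ) - 1 / ((n : ℝ) + 1) = (2 * (n : ℝ) + 1) / ((n : ℝ) + 1) := by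
      field_simp
      ring
    simp only [Function.comp_apply, harg]
  have hEM : Tendsto (fun n : ℕ => (harmonic n : ℝ) - Real.log ((n : ℝ) + 1)) atTop
      (𝓝 Real.eulerMascheroniConstant) := Real.tendsto_harmonic_sub_log_add_one
  have := (hW.add hratio).sub hEM
  have hval : Real.log (π / 2) + Real.log 2 - Real.eulerMascheroniConstant
      = -Real.eulerMascheroniConstant + Real.log π := by
    rw [Real.log_div Real.pi_ne_zero (by norm_num)]
    ring
  rw [hval] at this
  exact this

/-- ∑_{n=1}^∞ (2 log(1 + 1/(2n−1)) − 1/n) = −γ + log π. -/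
theorem stmt_11 :
    HasSum (fun n : ℕ => 2 * Real.log (1 + 1 / (2 * (n + 1 : ℝ) - 1)) - 1 / (n + 1 : ℝ))
      (-Real.eulerMascheroniConstant + Real.log π) := by
  rw [hasSum_iff_tendsto_nat_of_nonneg term_nonneg]
  exact tendsto_partial_sums
end
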